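/- arXiv:1206.0079 — 4 statements merged into one kernel-verified Lean document; each statement's English description precedes it below -/
import Mathlib

section
/- Let A : Fin 3 → Fin 3 → ℝ with A ≠ 0 and B : Fin 3 → Fin 3 → Fin 3 → ℝ, and set T := ∑_{n,i,j} B_{nij}² − (∑_{i,j} A_{ij}²)^{-1}·∑_n (∑_{i,j} A_{ij} B_{nij})². Then (∑_{i,j} A_{ij}²)·T ≥ (1/18)·∑_d (∑_{i,j} (A_{ij} B_{idj} − A_{dj} B_{iij}))² + (1/2)·∑_{(i,j,n,d,m) : (n,m) ≠ (i,j)} (A_{ij} B_{ndm} − A_{dm} B_{nij})². -/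
open Finset

lemma lagrange_id {ι : Type*} (s : Finset ι) (f g : ι → ℝ) :
    (∑ i ∈ s, f i ^ 2) * (∑ i ∈ s, g i ^ 2) - (∑ i ∈ s, f i * g i) ^ 2
      = (1/2) * ∑ i ∈ s, ∑ j ∈ s, (f i * g j - f j * g i) ^ 2 := by
  have h : ∑ i ∈ s, ∑ j ∈ s, (f i * g j - f j * g i) ^ 2
      = ∑ i ∈ s, ∑ j ∈ s, (f i ^ 2 * g j ^ 2 + g i ^ 2 * f j ^ 2
        - 2 * ((f i * g i) * (f j * g j))) := by
    apply Finset.sum_congr rfl; intros; apply Finset.sum_congr rfl; intros; ring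
  rw [h]
  simp only [Finset.sum_sub_distrib, Finset.sum_add_distrib, ← Finset.mul_sum,
    ← Finset.sum_mul]
  ring


lemma sum_pair_ite (i j : Fin 3) (f : Fin 3 → Fin 3 → ℝ) :
    ∑ n, ∑ m, (if (n, m) = (i, j) then f n m else 0) = f i j := by
  simp [Prod.mk.injEq, ite_and, Finset.sum_ite_eq']

set_option maxHeartbeats 1000000 in
/-- The algebraic inequality from Step 1 of the proof of the pointwise estimate
for the second fundamental form: with `A` the second fundamental form,
`B n i j = ∇ₙ A i j`, and `T = |∇A|² − |∇|A||²`, one has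
`|A|² T ≥ (1/18) ∑_d (∑_{i,j} (A_{ij} B_{idj} − A_{dj} B_{iij}))²
        + (1/2) ∑_{(n,m) ≠ (i,j)} (A_{ij} B_{ndm} − A_{dm} B_{nij})²`. -/
theorem second_fundamental_form_T_inequality
    (A : Fin 3 → Fin 3 → ℝ) (hA : A ≠ 0) (B : Fin 3 → Fin 3 → Fin 3 → ℝ)
    (T : ℝ)
    (hT : T = (∑ n, ∑ i, ∑ j, (B n i j) ^ 2)
        - (∑ i, ∑ j, (A i j) ^ 2)⁻¹ * ∑ n, (∑ i, ∑ j, A i j * B n i j) ^ 2) :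
    (∑ i, ∑ j, (A i j) ^ 2) * T ≥
      (1 / 18) * ∑ d, (∑ i, ∑ j, (A i j * B i d j - A d j * B i i j)) ^ 2
      + (1 / 2) * ∑ i, ∑ j, ∑ n, ∑ d, ∑ m,
          (if (n, m) ≠ (i, j) then (A i j * B n d m - A d m * B n i j) ^ 2 else 0) := by
  have hpos : (0:ℝ) < ∑ i, ∑ j, A i j ^ 2 := by
    obtain ⟨i, hi⟩ : ∃ i, A i ≠ 0 := Function.ne_iff.mp hA
    obtain ⟨j, hj⟩ : ∃ j, A i j ≠ 0 := Function.ne_iff.mp hi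
    refine Finset.sum_pos' (fun i _ => Finset.sum_nonneg fun j _ => sq_nonneg _)
      ⟨i, Finset.mem_univ i,
        Finset.sum_pos' (fun j _ => sq_nonneg _)
          ⟨j, Finset.mem_univ j, by positivity⟩⟩
  have hKey : (∑ i, ∑ j, (A i j) ^ 2) * T
      = (1/2) * ∑ i, ∑ j, ∑ n, ∑ d, ∑ m,
          (A i j * B n d m - A d m * B n i j) ^ 2 := by
    calc (∑ i, ∑ j, (A i j) ^ 2) * T
        = ∑ n, ((∑ i, ∑ j, (A i j) ^ 2) * (∑ i, ∑ j, (B n i j) ^ 2)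
            - (∑ i, ∑ j, A i j * B n i j) ^ 2) := by
          rw [hT, mul_sub, ← mul_assoc, mul_inv_cancel₀ hpos.ne', one_mul,
            Finset.mul_sum, ← Finset.sum_sub_distrib]
      _ = ∑ n, (1/2) * ∑ i, ∑ j, ∑ d, ∑ m,
            (A i j * B n d m - A d m * B n i j) ^ 2 := by
          refine Finset.sum_congr rfl fun n _ => ?_
          have h := lagrange_id (Finset.univ : Finset (Fin 3 × Fin 3))
            (fun p => A p.1 p.2) (fun p => B n p.1 p.2)
          simpa [Fintype.sum_prod_type] using h
      _ = (1/2) * ∑ i, ∑ j, ∑ n, ∑ d, ∑ m,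
            (A i j * B n d m - A d m * B n i j) ^ 2 := by
          rw [← Finset.mul_sum]
          congr 1
          exact Finset.sum_comm.trans (Finset.sum_congr rfl fun i _ => Finset.sum_comm)
  set Sne := ∑ i, ∑ j, ∑ n, ∑ d, ∑ m,
      (if (n, m) ≠ (i, j) then (A i j * B n d m - A d m * B n i j) ^ 2 else 0) with hSne
  have hsplit : ∑ i, ∑ j, ∑ n, ∑ d, ∑ m, (A i j * B n d m - A d m * B n i j) ^ 2
      = Sne + ∑ i, ∑ j, ∑ d, (A i j * B i d j - A d j * B i i j) ^ 2 := by
    have h1 : ∀ i j : Fin 3, (∑ n, ∑ d, ∑ m, (A i j * B n d m - A d m * B n i j) ^ 2)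
        = (∑ n, ∑ d, ∑ m, (if (n, m) ≠ (i, j)
              then (A i j * B n d m - A d m * B n i j) ^ 2 else 0))
          + ∑ d, (A i j * B i d j - A d j * B i i j) ^ 2 := by
      intro i j
      have h2 : ∀ n d m : Fin 3, (A i j * B n d m - A d m * B n i j) ^ 2
          = (if (n, m) ≠ (i, j) then (A i j * B n d m - A d m * B n i j) ^ 2 else 0)
            + (if (n, m) = (i, j) then (A i j * B n d m - A d m * B n i j) ^ 2 else 0) := by
        intro n d m
        by_cases h : (n, m) = (i, j) <;> simp [h]
      have h3 : (∑ n, ∑ d, ∑ m, (A i j * B n d m - A d m * B n i j) ^ 2)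
          = ∑ n, ∑ d, ∑ m,
            ((if (n, m) ≠ (i, j) then (A i j * B n d m - A d m * B n i j) ^ 2 else 0)
            + (if (n, m) = (i, j) then (A i j * B n d m - A d m * B n i j) ^ 2 else 0)) :=
        Finset.sum_congr rfl fun n _ => Finset.sum_congr rfl fun d _ =>
          Finset.sum_congr rfl fun m _ => h2 n d m
      rw [h3]
      simp only [Finset.sum_add_distrib]
      congr 1
      rw [Finset.sum_comm]
      refine Finset.sum_congr rfl fun d _ => ?_
      exact sum_pair_ite i j (fun n m => (A i j * B n d m - A d m * B n i j) ^ 2)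
    simp_rw [h1, Finset.sum_add_distrib]
    rfl
  have hCS : ∀ d : Fin 3, (∑ i, ∑ j, (A i j * B i d j - A d j * B i i j)) ^ 2
      ≤ 9 * ∑ i, ∑ j, (A i j * B i d j - A d j * B i i j) ^ 2 := by
    intro d
    have h := sq_sum_le_card_mul_sum_sq (s := (Finset.univ : Finset (Fin 3 × Fin 3)))
      (f := fun p => A p.1 p.2 * B p.1 d p.2 - A d p.2 * B p.1 p.1 p.2)
    simpa [Fintype.sum_prod_type] using h
  have hne_nonneg : (0:ℝ) ≤ Sne := by
    refine Finset.sum_nonneg fun _ _ => Finset.sum_nonneg fun _ _ =>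
      Finset.sum_nonneg fun _ _ => Finset.sum_nonneg fun _ _ =>
      Finset.sum_nonneg fun _ _ => ?_
    split <;> positivity
  have hsum : (∑ d, (∑ i, ∑ j, (A i j * B i d j - A d j * B i i j)) ^ 2)
      ≤ 9 * ∑ i, ∑ j, ∑ d, (A i j * B i d j - A d j * B i i j) ^ 2 := by
    have : (∑ d, (∑ i, ∑ j, (A i j * B i d j - A d j * B i i j)) ^ 2)
        ≤ ∑ d, 9 * ∑ i, ∑ j, (A i j * B i d j - A d j * B i i j) ^ 2 :=
      Finset.sum_le_sum fun d _ => hCS d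
    refine this.trans_eq ?_
    rw [← Finset.mul_sum]
    congr 1
    exact Finset.sum_comm.trans (Finset.sum_congr rfl fun i _ => Finset.sum_comm)
  rw [ge_iff_le, hKey, hsplit]
  linarith
end

section
/- Let φ̃ : [0,1] → ℝ be continuously differentiable with φ̃ > 0 on [0,1], let b ∈ ℝ, δ ∈ (0,1), μ₁ > 0, μ₂ ∈ ℝ, and let λ > 0 satisfy λ ≥ 4·max_{t ∈ [0,1]} |φ̃'(t)/φ̃(t)|. Define ψ(τ) := μ₁·∫_{τ+δ}^{1} e^{λs}·s^{−2b} ds + μ₂. Then for all τ ∈ (0, 1−δ): ψ''(τ) + 2·(b/(τ+δ) + φ̃'(τ)/φ̃(τ))·ψ'(τ) ≤ (λ/2)·ψ'(τ) < 0. -/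
open Real Set Filter Topology intervalIntegral

private lemma barrier_f_hasDeriv (lam b : ℝ) {x : ℝ} (hx : 0 < x) :
    HasDerivAt (fun s : ℝ => Real.exp (lam * s) * s ^ (-(2 * b)))
      ((Real.exp (lam * x) * x ^ (-(2 * b))) * (lam - 2 * b / x)) x := by
  have h1 : HasDerivAt (fun s : ℝ => Real.exp (lam * s)) (Real.exp (lam * x) * lam) x := by
    simpa using ((hasDerivAt_id x).const_mul lam).exp
  have h2 : HasDerivAt (fun s : ℝ => s ^ (-(2 * b))) ((-(2 * b)) * x ^ (-(2 * b) - 1)) x :=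
    Real.hasDerivAt_rpow_const (Or.inl hx.ne')
  have h := h1.mul h2
  refine h.congr_deriv ?_
  rw [Real.rpow_sub_one hx.ne']
  field_simp
  ring

private lemma barrier_f_contOn (lam b : ℝ) :
    ContinuousOn (fun s : ℝ => Real.exp (lam * s) * s ^ (-(2 * b))) (Set.Ioi 0) :=
  fun x hx => ((barrier_f_hasDeriv lam b hx).continuousAt).continuousWithinAt

/-- The key inequality in the proof of Proposition 5.2: with `φ̃` continuously
differentiable and positive on `[0,1]`, `λ > 0` with `λ ≥ 4 max |φ̃'/φ̃|`, the
barrier `ψ(τ) = μ₁ ∫_{τ+δ}^1 e^{λ s} s^{-2b} ds + μ₂` satisfies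
`ψ'' + 2 (b/(τ+δ) + φ̃'/φ̃) ψ' ≤ (λ/2) ψ' < 0` on `(0, 1-δ)`. -/
theorem regularized_barrier_inequality
    (φt φt' : ℝ → ℝ)
    (hφdiff : ∀ t ∈ Set.Icc (0 : ℝ) 1, HasDerivWithinAt φt (φt' t) (Set.Icc 0 1) t)
    (hφ'cont : ContinuousOn φt' (Set.Icc (0 : ℝ) 1))
    (hφpos : ∀ t ∈ Set.Icc (0 : ℝ) 1, 0 < φt t)
    (b δ μ₁ μ₂ lam : ℝ) (hδ : δ ∈ Set.Ioo (0 : ℝ) 1) (hμ₁ : 0 < μ₁)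
    (hlam : 0 < lam)
    (hlam4 : ∀ t ∈ Set.Icc (0 : ℝ) 1, 4 * |φt' t / φt t| ≤ lam)
    (ψ : ℝ → ℝ)
    (hψ : ∀ τ : ℝ, ψ τ =
      μ₁ * (∫ s in (τ + δ)..1, Real.exp (lam * s) * s ^ (-(2 * b))) + μ₂) :
    ∀ τ ∈ Set.Ioo (0 : ℝ) (1 - δ),
      deriv (deriv ψ) τ + 2 * (b / (τ + δ) + φt' τ / φt τ) * deriv ψ τ
          ≤ (lam / 2) * deriv ψ τ
      ∧ (lam / 2) * deriv ψ τ < 0 := by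
  intro τ hτ
  obtain ⟨hτ0, hτ1⟩ := hτ
  obtain ⟨hδ0, hδ1⟩ := hδ
  set f : ℝ → ℝ := fun s => Real.exp (lam * s) * s ^ (-(2 * b)) with hfdef
  have hψfun : ψ = fun t => μ₁ * (∫ s in (t + δ)..1, f s) + μ₂ := funext hψ
  have hcont : ContinuousOn f (Set.Ioi 0) := barrier_f_contOn lam b
  have hD1 : ∀ t : ℝ, 0 < t + δ → HasDerivAt ψ (-(μ₁ * f (t + δ))) t := by
    intro t ht
    have hint : IntervalIntegrable f MeasureTheory.volume (t + δ) 1 := by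
      apply (hcont.mono ?_).intervalIntegrable
      intro x hx
      rcases Set.mem_uIcc.1 hx with h | h
      · exact lt_of_lt_of_le ht h.1
      · exact lt_of_lt_of_le zero_lt_one h.1
    have hmeas : StronglyMeasurableAtFilter f (𝓝 (t + δ)) :=
      hcont.stronglyMeasurableAtFilter isOpen_Ioi (t + δ) ht
    have hc : ContinuousAt f (t + δ) := hcont.continuousAt (Ioi_mem_nhds ht)
    have hI := intervalIntegral.integral_hasDerivAt_left hint hmeas hc
    have hcomp := hI.comp t ((hasDerivAt_id t).add_const δ)
    have hfinal := (hcomp.const_mul μ₁).add_const μ₂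
    rw [hψfun]
    refine hfinal.congr_deriv ?_
    ring
  have hτδ : 0 < τ + δ := by linarith
  have hderiv : ∀ t : ℝ, 0 < t + δ → deriv ψ t = -(μ₁ * f (t + δ)) :=
    fun t ht => (hD1 t ht).deriv
  have heq : deriv ψ =ᶠ[𝓝 τ] fun t => -(μ₁ * f (t + δ)) := by
    filter_upwards [Ioi_mem_nhds (show -δ < τ by linarith)] with t ht
    exact hderiv t (by simp only [Set.mem_Ioi] at ht; linarith)
  have hD2 : HasDerivAt (fun t => -(μ₁ * f (t + δ)))
      (-(μ₁ * (f (τ + δ) * (lam - 2 * b / (τ + δ))))) τ := by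
    have h := (((barrier_f_hasDeriv lam b hτδ).comp τ
      ((hasDerivAt_id τ).add_const δ)).const_mul μ₁).neg
    refine h.congr_deriv ?_
    ring
  have h2 : deriv (deriv ψ) τ = -(μ₁ * (f (τ + δ) * (lam - 2 * b / (τ + δ)))) := by
    rw [Filter.EventuallyEq.deriv_eq heq]
    exact hD2.deriv
  have h1 : deriv ψ τ = -(μ₁ * f (τ + δ)) := hderiv τ hτδ
  have hfpos : 0 < f (τ + δ) := mul_pos (Real.exp_pos _) (Real.rpow_pos_of_pos hτδ _)
  have hμF : 0 < μ₁ * f (τ + δ) := mul_pos hμ₁ hfpos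
  have hτIcc : τ ∈ Set.Icc (0 : ℝ) 1 := ⟨hτ0.le, by linarith⟩
  have hr := hlam4 τ hτIcc
  have habs := abs_le.1 (show |φt' τ / φt τ| ≤ lam / 4 by linarith)
  constructor
  · rw [h2, h1]
    have key : -(μ₁ * (f (τ + δ) * (lam - 2 * b / (τ + δ))))
        + 2 * (b / (τ + δ) + φt' τ / φt τ) * -(μ₁ * f (τ + δ))
        = -(μ₁ * f (τ + δ)) * (lam + 2 * (φt' τ / φt τ)) := by
      field_simp
      ring
    rw [key]
    have hle : lam / 2 ≤ lam + 2 * (φt' τ / φt τ) := by linarith [habs.1]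
    nlinarith [mul_le_mul_of_nonneg_left hle hμF.le]
  · rw [h1]
    nlinarith
end

section
/- Let b, l̃ ∈ ℝ with 2b − 1 < l̃, let λ, Λ > 0, and let σ ∈ {1, −1}. Define P(τ) := σ·(2λ/(l̃+1−2b))·τ^{l̃+1+2b} + Λ²·τ^{4b} for τ > 0. Then there exists τ₀ > 0 such that: (i) P(τ) > 0 for all τ ∈ (0, τ₀]; (ii) the function χ(τ) := ∫_{τ}^{τ₀} P(s)^{−1/2} ds is twice differentiable on (0, τ₀) with χ'(τ) = −P(τ)^{−1/2} < 0; (iii) for all τ ∈ (0, τ₀): (1/(τ^{2b}·χ'(τ)²))·(χ''(τ)/χ'(τ) + 2b/τ) = −σ·λ·τ^{l̃}; and (iv) (1/(2Λ))·τ^{−2b} ≤ −χ'(τ) ≤ (2/Λ)·τ^{−2b} for all τ ∈ (0, τ₀). -/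
open Real Set Filter Topology intervalIntegral

/-- The ODE construction (equations (171)–(174)) in part (2) of Lemma 6.1:
with `P(τ) = σ (2λ/(l̃+1-2b)) τ^{l̃+1+2b} + Λ² τ^{4b}` and `2b - 1 < l̃`, there
is `τ₀ > 0` on which `P > 0`, and `χ(τ) = ∫_τ^{τ₀} P(s)^{-1/2} ds` is twice
differentiable with `χ' = -P^{-1/2} < 0`, solves
`(1/(τ^{2b} χ'²)) (χ''/χ' + 2b/τ) = -σ λ τ^{l̃}`, and satisfies
`(1/(2Λ)) τ^{-2b} ≤ -χ' ≤ (2/Λ) τ^{-2b}`. -/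
theorem ode_subsupersolution_construction
    (b lt lam Λ σ : ℝ) (hbl : 2 * b - 1 < lt) (hlam : 0 < lam) (hΛ : 0 < Λ)
    (hσ : σ = 1 ∨ σ = -1)
    (P : ℝ → ℝ)
    (hP : ∀ τ : ℝ, P τ =
      σ * (2 * lam / (lt + 1 - 2 * b)) * τ ^ (lt + 1 + 2 * b) + Λ ^ 2 * τ ^ (4 * b)) :
    ∃ τ₀ > (0 : ℝ),
      (∀ τ ∈ Set.Ioc (0 : ℝ) τ₀, 0 < P τ)
      ∧ ∃ χ' χ'' : ℝ → ℝ,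
          (∀ τ ∈ Set.Ioo (0 : ℝ) τ₀, χ' τ = -(P τ) ^ (-(1 / 2) : ℝ))
          ∧ ∀ τ ∈ Set.Ioo (0 : ℝ) τ₀,
              HasDerivAt (fun t : ℝ => ∫ s in t..τ₀, (P s) ^ (-(1 / 2) : ℝ)) (χ' τ) τ
              ∧ χ' τ < 0
              ∧ HasDerivAt χ' (χ'' τ) τ
              ∧ (1 / (τ ^ (2 * b) * (χ' τ) ^ 2)) * (χ'' τ / χ' τ + 2 * b / τ)
                  = -σ * lam * τ ^ lt
              ∧ (1 / (2 * Λ)) * τ ^ (-(2 * b)) ≤ -χ' τ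
              ∧ -χ' τ ≤ (2 / Λ) * τ ^ (-(2 * b)) := by
  set c : ℝ := σ * (2 * lam / (lt + 1 - 2 * b)) with hc
  have hd : (0:ℝ) < lt + 1 - 2 * b := by linarith
  have hPfun : P = fun t : ℝ => c * t ^ (lt + 1 + 2 * b) + Λ ^ 2 * t ^ (4 * b) :=
    funext fun t => hP t
  set M : ℝ := 2 * lam / (lt + 1 - 2 * b) with hM
  have hMpos : 0 < M := by positivity
  have habs : |c| = M := by
    rcases hσ with h | h <;> simp [hc, h, abs_of_pos hMpos, abs_of_nonneg hMpos.le]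
  set A : ℝ := Λ ^ 2 / (2 * M) with hA
  have hApos : 0 < A := by positivity
  set τ₀ : ℝ := min 1 (A ^ (lt + 1 - 2 * b)⁻¹) with hτ₀def
  have hτ₀pos : 0 < τ₀ := lt_min one_pos (Real.rpow_pos_of_pos hApos _)
  -- key two-sided bound for P
  have key : ∀ τ : ℝ, 0 < τ → τ ≤ τ₀ →
      Λ ^ 2 / 2 * (τ ^ (2 * b) * τ ^ (2 * b)) ≤ P τ ∧
      P τ ≤ 3 * Λ ^ 2 / 2 * (τ ^ (2 * b) * τ ^ (2 * b)) := by
    intro τ hτ hτle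
    have h4b : τ ^ (4 * b) = τ ^ (2 * b) * τ ^ (2 * b) := by
      rw [show (4:ℝ) * b = 2 * b + 2 * b by ring, Real.rpow_add hτ]
    have htd : τ ^ (lt + 1 - 2 * b) ≤ A := by
      calc τ ^ (lt + 1 - 2 * b) ≤ τ₀ ^ (lt + 1 - 2 * b) :=
            Real.rpow_le_rpow hτ.le hτle hd.le
        _ ≤ (A ^ (lt + 1 - 2 * b)⁻¹) ^ (lt + 1 - 2 * b) :=
            Real.rpow_le_rpow hτ₀pos.le (min_le_right _ _) hd.le
        _ = A := Real.rpow_inv_rpow hApos.le hd.ne'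
    have hsplit : τ ^ (lt + 1 + 2 * b)
        = τ ^ (2 * b) * τ ^ (2 * b) * τ ^ (lt + 1 - 2 * b) := by
      rw [show lt + 1 + 2 * b = 2 * b + 2 * b + (lt + 1 - 2 * b) by ring,
        Real.rpow_add hτ, Real.rpow_add hτ]
    have hub : |c * τ ^ (lt + 1 + 2 * b)| ≤ Λ ^ 2 / 2 * (τ ^ (2 * b) * τ ^ (2 * b)) := by
      rw [abs_mul, habs, hsplit, abs_of_nonneg (by positivity)]
      have hupos : (0:ℝ) ≤ τ ^ (2 * b) * τ ^ (2 * b) := by positivity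
      calc M * (τ ^ (2 * b) * τ ^ (2 * b) * τ ^ (lt + 1 - 2 * b))
          ≤ M * (τ ^ (2 * b) * τ ^ (2 * b) * A) := by
            apply mul_le_mul_of_nonneg_left _ hMpos.le
            exact mul_le_mul_of_nonneg_left htd hupos
        _ = Λ ^ 2 / 2 * (τ ^ (2 * b) * τ ^ (2 * b)) := by
            rw [hA]; field_simp
    have := abs_le.mp hub
    rw [hP τ, h4b]
    constructor <;> nlinarith [this.1, this.2]
  have hpos : ∀ τ ∈ Set.Ioc (0:ℝ) τ₀, 0 < P τ := by
    intro τ hτ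
    have h := (key τ hτ.1 hτ.2).1
    have : 0 < Λ ^ 2 / 2 * (τ ^ (2 * b) * τ ^ (2 * b)) := by
      have := Real.rpow_pos_of_pos hτ.1 (2 * b); positivity
    linarith
  refine ⟨τ₀, hτ₀pos, hpos,
    (fun t => -(P t) ^ (-(1 / 2) : ℝ)),
    (fun t => -((-(1 / 2) : ℝ) * (P t) ^ ((-(1 / 2) : ℝ) - 1) *
      (c * ((lt + 1 + 2 * b) * t ^ (lt + 1 + 2 * b - 1)) +
        Λ ^ 2 * (4 * b * t ^ (4 * b - 1))))),
    fun τ _ => rfl, fun τ hτ => ?_⟩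
  obtain ⟨hτp, hτlt⟩ := hτ
  have hQ : 0 < P τ := hpos τ ⟨hτp, hτlt.le⟩
  -- continuity facts
  have hPcont : ∀ s : ℝ, s ≠ 0 → ContinuousAt P s := by
    intro s hs
    rw [hPfun]
    exact (continuousAt_const.mul (Real.continuousAt_rpow_const s _ (Or.inl hs))).add
      (continuousAt_const.mul (Real.continuousAt_rpow_const s _ (Or.inl hs)))
  have hfc : ∀ s : ℝ, 0 < s → s ≤ τ₀ →
      ContinuousAt (fun t => (P t) ^ (-(1 / 2) : ℝ)) s := by
    intro s hs hsle
    exact (Real.continuousAt_rpow_const (P s) _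
      (Or.inl (hpos s ⟨hs, hsle⟩).ne')).comp (hPcont s hs.ne')
  have hint : IntervalIntegrable (fun s => (P s) ^ (-(1 / 2) : ℝ)) MeasureTheory.volume τ τ₀ := by
    apply ContinuousOn.intervalIntegrable
    intro s hs
    rw [Set.uIcc_of_le hτlt.le] at hs
    exact (hfc s (lt_of_lt_of_le hτp hs.1) hs.2).continuousWithinAt
  have hmeas : StronglyMeasurableAtFilter (fun s => (P s) ^ (-(1 / 2) : ℝ))
      (nhds τ) MeasureTheory.volume := by
    refine ⟨Set.Ioo 0 τ₀, Ioo_mem_nhds hτp hτlt, ?_⟩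
    apply ContinuousOn.aestronglyMeasurable _ measurableSet_Ioo
    intro s hs
    exact (hfc s hs.1 hs.2.le).continuousWithinAt
  have hder : HasDerivAt (fun t : ℝ => ∫ s in t..τ₀, (P s) ^ (-(1 / 2) : ℝ))
      (-(P τ) ^ (-(1 / 2) : ℝ)) τ :=
    intervalIntegral.integral_hasDerivAt_left hint hmeas (hfc τ hτp hτlt.le)
  have hqpos : 0 < (P τ) ^ (-(1 / 2) : ℝ) := Real.rpow_pos_of_pos hQ _
  -- derivative of P
  have hPd : HasDerivAt P
      (c * ((lt + 1 + 2 * b) * τ ^ (lt + 1 + 2 * b - 1)) +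
        Λ ^ 2 * (4 * b * τ ^ (4 * b - 1))) τ := by
    rw [hPfun]
    exact ((Real.hasDerivAt_rpow_const (Or.inl hτp.ne')).const_mul c).add
      ((Real.hasDerivAt_rpow_const (Or.inl hτp.ne')).const_mul (Λ ^ 2))
  have hch2 : HasDerivAt (fun t => -(P t) ^ (-(1 / 2) : ℝ))
      (-((-(1 / 2) : ℝ) * (P τ) ^ ((-(1 / 2) : ℝ) - 1) *
      (c * ((lt + 1 + 2 * b) * τ ^ (lt + 1 + 2 * b - 1)) +
        Λ ^ 2 * (4 * b * τ ^ (4 * b - 1))))) τ :=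
    ((Real.hasDerivAt_rpow_const (Or.inl hQ.ne')).comp τ hPd).neg
  refine ⟨hder, by simpa using hqpos, hch2, ?_, ?_, ?_⟩
  · -- the ODE identity
    have hqq : ((P τ) ^ (-(1 / 2) : ℝ)) ^ 2 = (P τ)⁻¹ := by
      rw [← Real.rpow_natCast ((P τ) ^ (-(1 / 2) : ℝ)) 2, ← Real.rpow_mul hQ.le]
      norm_num [Real.rpow_neg_one]
    have h32 : (P τ) ^ ((-(1 / 2) : ℝ) - 1) = (P τ) ^ (-(1 / 2) : ℝ) / P τ :=
      Real.rpow_sub_one hQ.ne' _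
    have hA1 : τ ^ (lt + 1 + 2 * b - 1) = τ ^ lt * τ ^ (2 * b) := by
      rw [show lt + 1 + 2 * b - 1 = lt + 2 * b by ring, Real.rpow_add hτp]
    have hA2 : τ ^ (4 * b - 1) = τ ^ (2 * b) * τ ^ (2 * b) / τ := by
      rw [Real.rpow_sub_one hτp.ne', show (4:ℝ) * b = 2 * b + 2 * b by ring,
        Real.rpow_add hτp]
    have hA0 : τ ^ (lt + 1 + 2 * b) = τ ^ lt * τ ^ (2 * b) * τ := by
      rw [show lt + 1 + 2 * b = lt + 2 * b + 1 by ring, Real.rpow_add_one hτp.ne',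
        Real.rpow_add hτp]
    have hQeq : P τ = c * (τ ^ lt * τ ^ (2 * b) * τ) + Λ ^ 2 * (τ ^ (2 * b) * τ ^ (2 * b)) := by
      rw [hP τ, hA0, show (4:ℝ) * b = 2 * b + 2 * b by ring, Real.rpow_add hτp]
    have hu : 0 < τ ^ (2 * b) := Real.rpow_pos_of_pos hτp _
    have ht1 : 0 < τ ^ lt := Real.rpow_pos_of_pos hτp _
    have hcd : c * (lt + 1 - 2 * b) = σ * (2 * lam) := by
      rw [hc, hM]; field_simp
    -- abbreviations
    simp only [neg_sq, hqq, h32, hA1, hA2]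
    set X : ℝ := P τ with hX
    set q : ℝ := X ^ (-(1 / 2) : ℝ) with hq
    set u : ℝ := τ ^ (2 * b) with huu
    set t1 : ℝ := τ ^ lt with ht1'
    set D : ℝ := c * ((lt + 1 + 2 * b) * (t1 * u)) + Λ ^ 2 * (4 * b * (u * u / τ)) with hD
    have hr : (-((-(1 / 2) : ℝ) * (q / X) * D)) / (-q) = -(D / (2 * X)) := by
      field_simp
    rw [hr]
    have h1 : -(D / (2 * X)) + 2 * b / τ = (4 * b * X - D * τ) / (2 * X * τ) := by
      field_simp
      ring
    have hnum : 4 * b * X - D * τ = -(σ * (2 * lam)) * (t1 * u * τ) := by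
      rw [hD, hQeq, ← hcd]
      field_simp
      ring
    rw [h1, hnum]
    have hXne : X ≠ 0 := hQ.ne'
    field_simp
  · -- lower bound
    have hU := (key τ hτp hτlt.le).2
    have hu : 0 < τ ^ (2 * b) := Real.rpow_pos_of_pos hτp _
    have hqs : (P τ) ^ (-(1 / 2) : ℝ) = (Real.sqrt (P τ))⁻¹ := by
      rw [Real.sqrt_eq_rpow, ← Real.rpow_neg hQ.le]
    have h1 : Real.sqrt (P τ) ≤ 2 * Λ * τ ^ (2 * b) := by
      have h2 : P τ ≤ (2 * Λ * τ ^ (2 * b)) ^ 2 := by nlinarith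
      calc Real.sqrt (P τ) ≤ Real.sqrt ((2 * Λ * τ ^ (2 * b)) ^ 2) := Real.sqrt_le_sqrt h2
        _ = 2 * Λ * τ ^ (2 * b) := Real.sqrt_sq (by positivity)
    have hsq : 0 < Real.sqrt (P τ) := Real.sqrt_pos.mpr hQ
    have : (2 * Λ * τ ^ (2 * b))⁻¹ ≤ (Real.sqrt (P τ))⁻¹ := inv_anti₀ hsq h1
    simp only [neg_neg, Real.rpow_neg hτp.le, hqs]
    calc 1 / (2 * Λ) * (τ ^ (2 * b))⁻¹ = (2 * Λ * τ ^ (2 * b))⁻¹ := by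
          rw [mul_inv, one_div]
      _ ≤ (Real.sqrt (P τ))⁻¹ := this
  · -- upper bound
    have hL := (key τ hτp hτlt.le).1
    have hu : 0 < τ ^ (2 * b) := Real.rpow_pos_of_pos hτp _
    have hqs : (P τ) ^ (-(1 / 2) : ℝ) = (Real.sqrt (P τ))⁻¹ := by
      rw [Real.sqrt_eq_rpow, ← Real.rpow_neg hQ.le]
    have h1 : Λ / 2 * τ ^ (2 * b) ≤ Real.sqrt (P τ) := by
      rw [Real.le_sqrt (by positivity) hQ.le]
      nlinarith
    have hp2 : 0 < Λ / 2 * τ ^ (2 * b) := by positivity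
    have h2 : (Real.sqrt (P τ))⁻¹ ≤ (Λ / 2 * τ ^ (2 * b))⁻¹ := inv_anti₀ hp2 h1
    simp only [neg_neg, Real.rpow_neg hτp.le, hqs]
    calc (Real.sqrt (P τ))⁻¹ ≤ (Λ / 2 * τ ^ (2 * b))⁻¹ := h2
      _ = 2 / Λ * (τ ^ (2 * b))⁻¹ := by rw [mul_inv, inv_div]
end

section
/- For every constant c > 0 there exist ρ ∈ (0, 1) and C > 0 with the following property: if w : ℝ³ → ℝ is twice continuously differentiable on the open unit ball centered at the origin, satisfies w(0) = 0 and ∇w(0) = 0, and satisfies the Hessian bound ‖∇²w(y)‖ ≤ c·(1 + |∇w(y)|²)^{3/2} for every y in the unit ball, then |w(y)| + |∇w(y)| + ‖∇²w(y)‖ ≤ C for every y with |y| ≤ ρ. -/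
open Real Set Metric

private lemma rpow_two_le_three : (2:ℝ) ^ ((3:ℝ)/2) ≤ 3 := by
  have h0 : (0:ℝ) ≤ (2:ℝ) ^ ((3:ℝ)/2) := Real.rpow_nonneg (by norm_num) _
  have e : ((2:ℝ) ^ ((3:ℝ)/2)) ^ (2:ℕ) = 8 := by
    rw [← Real.rpow_natCast ((2:ℝ) ^ ((3:ℝ)/2)) 2, ← Real.rpow_mul (by norm_num : (0:ℝ) ≤ 2),
        show (3:ℝ)/2 * (2:ℕ) = ((3:ℕ):ℝ) by norm_num, Real.rpow_natCast]
    norm_num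
  nlinarith

private lemma hess_bound_aux (c x : ℝ) (hc : 0 ≤ c) (hx0 : 0 ≤ x) (hx : x ≤ 1) :
    c * (1 + x ^ 2) ^ ((3:ℝ)/2) ≤ 3 * c := by
  have h1 : (1 + x ^ 2 : ℝ) ≤ 2 := by nlinarith
  have h2 : (1 + x ^ 2 : ℝ) ^ ((3:ℝ)/2) ≤ (2:ℝ) ^ ((3:ℝ)/2) :=
    Real.rpow_le_rpow (by positivity) h1 (by norm_num)
  have h3 := rpow_two_le_three
  nlinarith

private lemma grad_small (c ρ : ℝ) (hc : 0 < c) (hρ0 : 0 < ρ) (hρ2 : ρ ≤ 1/2)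
    (hρc : 3 * c * ρ ≤ 1/4)
    (w : EuclideanSpace ℝ (Fin 3) → ℝ)
    (hw : ContDiffOn ℝ 2 w (Metric.ball 0 1))
    (h0 : fderiv ℝ w 0 = 0)
    (hH : ∀ y ∈ Metric.ball (0 : EuclideanSpace ℝ (Fin 3)) 1,
      ‖fderiv ℝ (fderiv ℝ w) y‖ ≤ c * (1 + ‖fderiv ℝ w y‖ ^ 2) ^ ((3 : ℝ) / 2)) :
    ∀ y : EuclideanSpace ℝ (Fin 3), ‖y‖ ≤ ρ → ‖fderiv ℝ w y‖ ≤ 1/2 := by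
  intro y hy
  -- membership helper
  have hball : ∀ t : ℝ, 0 ≤ t → t ≤ 1 → t • y ∈ Metric.ball (0 : EuclideanSpace ℝ (Fin 3)) 1 := by
    intro t ht0 ht1
    rw [mem_ball_zero_iff, norm_smul, Real.norm_eq_abs, abs_of_nonneg ht0]
    have : t * ‖y‖ ≤ 1 * ρ := mul_le_mul ht1 hy (norm_nonneg _) zero_le_one
    linarith
  -- differentiability of the gradient
  have hderiv : ∀ x ∈ Metric.ball (0 : EuclideanSpace ℝ (Fin 3)) 1,
      DifferentiableAt ℝ (fderiv ℝ w) x := by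
    intro x hx
    have hcd : ContDiffAt ℝ 2 w x := hw.contDiffAt (isOpen_ball.mem_nhds hx)
    have h1 : ContDiffAt ℝ 1 (fderiv ℝ w) x := hcd.fderiv_right (by norm_num)
    exact h1.differentiableAt one_ne_zero
  set g : ℝ → ℝ := fun t => ‖fderiv ℝ w (t • y)‖ with hg_def
  have hg0 : g 0 = 0 := by simp [hg_def, h0]
  -- continuity of g on [0,1]
  have hfc : ContinuousOn (fderiv ℝ w) (Metric.ball (0 : EuclideanSpace ℝ (Fin 3)) 1) :=
    hw.continuousOn_fderiv_of_isOpen isOpen_ball (by norm_num)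
  have hgc : ContinuousOn g (Icc 0 1) := by
    apply ContinuousOn.norm
    apply hfc.comp ((continuous_id.smul continuous_const).continuousOn)
    intro t ht
    exact hball t ht.1 ht.2
  -- key mean-value estimate: if g ≤ 1/2 on [0,s], then g s ≤ 1/4
  have key : ∀ s : ℝ, s ∈ Icc (0:ℝ) 1 → (∀ u : ℝ, u ∈ Icc (0:ℝ) s → g u ≤ 1/2) →
      g s ≤ 1/4 := by
    intro s hs hsmall
    have hseg : ∀ z ∈ segment ℝ (0 : EuclideanSpace ℝ (Fin 3)) (s • y),
        ∃ u : ℝ, 0 ≤ u ∧ u ≤ s ∧ z = u • y := by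
      intro z hz
      rw [segment_eq_image] at hz
      obtain ⟨u, hu, hz⟩ := hz
      refine ⟨u * s, mul_nonneg hu.1 hs.1, ?_, by rw [← hz]; simp [smul_smul]⟩
      calc u * s ≤ 1 * s := mul_le_mul_of_nonneg_right hu.2 hs.1
        _ = s := one_mul s
    have hdiff : ∀ z ∈ segment ℝ (0 : EuclideanSpace ℝ (Fin 3)) (s • y),
        DifferentiableAt ℝ (fderiv ℝ w) z := by
      intro z hz
      obtain ⟨u, hu0, hus, rfl⟩ := hseg z hz
      exact hderiv _ (hball u hu0 (hus.trans hs.2))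
    have hbound : ∀ z ∈ segment ℝ (0 : EuclideanSpace ℝ (Fin 3)) (s • y),
        ‖fderiv ℝ (fderiv ℝ w) z‖ ≤ 3 * c := by
      intro z hz
      obtain ⟨u, hu0, hus, rfl⟩ := hseg z hz
      have hzball := hball u hu0 (hus.trans hs.2)
      have h1 := hH _ hzball
      have h2 : ‖fderiv ℝ w (u • y)‖ ≤ 1/2 := hsmall u ⟨hu0, hus⟩
      calc ‖fderiv ℝ (fderiv ℝ w) (u • y)‖
          ≤ c * (1 + ‖fderiv ℝ w (u • y)‖ ^ 2) ^ ((3:ℝ)/2) := h1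
        _ ≤ 3 * c := hess_bound_aux c _ hc.le (norm_nonneg _) (by linarith)
    have hmvt := (convex_segment (0 : EuclideanSpace ℝ (Fin 3)) (s • y)).norm_image_sub_le_of_norm_fderiv_le
      hdiff hbound (left_mem_segment ℝ _ _) (right_mem_segment ℝ _ _)
    rw [h0, sub_zero, sub_zero, norm_smul, Real.norm_eq_abs, abs_of_nonneg hs.1] at hmvt
    have hsy : s * ‖y‖ ≤ 1 * ρ := mul_le_mul hs.2 hy (norm_nonneg _) zero_le_one
    calc g s ≤ 3 * c * (s * ‖y‖) := hmvt
      _ ≤ 3 * c * ρ := by nlinarith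
      _ ≤ 1/4 := hρc
  -- continuity/minimality argument: g ≤ 1/2 on all of [0,1]
  have hall : ∀ t ∈ Icc (0:ℝ) 1, g t ≤ 1/2 := by
    by_contra hcon
    push_neg at hcon
    set B : Set ℝ := {t | t ∈ Icc (0:ℝ) 1 ∧ 1/2 < g t} with hB_def
    have hBne : B.Nonempty := by
      obtain ⟨t, ht, hgt⟩ := hcon
      exact ⟨t, ht, hgt⟩
    have hBbdd : BddBelow B := ⟨0, fun t ht => ht.1.1⟩
    set T := sInf B with hT_def
    have hTlb : ∀ t ∈ B, T ≤ t := fun t ht => csInf_le hBbdd ht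
    have hT0 : 0 ≤ T := le_csInf hBne fun t ht => ht.1.1
    have hT1 : T ≤ 1 := hBne.elim fun t ht => (hTlb t ht).trans ht.1.2
    -- T is in the closure of B, so g T ≥ 1/2
    have hclosed : IsClosed (Icc (0:ℝ) 1 ∩ g ⁻¹' (Ici (1/2))) :=
      hgc.preimage_isClosed_of_isClosed isClosed_Icc isClosed_Ici
    have hTmem : T ∈ Icc (0:ℝ) 1 ∩ g ⁻¹' (Ici (1/2)) := by
      have h1 : T ∈ closure B := csInf_mem_closure hBne hBbdd
      have h2 : B ⊆ Icc (0:ℝ) 1 ∩ g ⁻¹' (Ici (1/2)) := fun t ht => ⟨ht.1, le_of_lt ht.2⟩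
      exact hclosed.closure_subset ((closure_mono h2) h1)
    have hgT : 1/2 ≤ g T := hTmem.2
    have hTpos : 0 < T := by
      rcases lt_or_eq_of_le hT0 with h | h
      · exact h
      · exfalso; rw [← h, hg0] at hgT; linarith
    -- g ≤ 1/2 strictly before T, hence g ≤ 1/4 strictly before T
    have hbefore : ∀ s ∈ Ico (0:ℝ) T, g s ≤ 1/4 := by
      intro s hs
      apply key s ⟨hs.1, hs.2.le.trans hT1⟩
      intro u hu
      by_contra hgu
      push_neg at hgu
      have : u ∈ B := ⟨⟨hu.1, (hu.2.trans hs.2.le).trans hT1⟩, hgu⟩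
      have := hTlb u this
      have : u < T := lt_of_le_of_lt hu.2 hs.2
      linarith
    -- take the limit s → T⁻
    have hlim : Filter.Tendsto g (nhdsWithin T (Ico 0 T)) (nhds (g T)) := by
      have := (hgc T ⟨hT0, hT1⟩)
      exact this.tendsto.mono_left (nhdsWithin_mono T (fun x hx => ⟨hx.1, hx.2.le.trans hT1⟩))
    haveI : (nhdsWithin T (Ico (0:ℝ) T)).NeBot := right_nhdsWithin_Ico_neBot hTpos
    have : g T ≤ 1/4 :=
      le_of_tendsto hlim (Filter.eventually_of_mem self_mem_nhdsWithin hbefore)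
    linarith
  have := hall 1 ⟨zero_le_one, le_refl 1⟩
  simpa [hg_def] using this

/-- The 'simple calculus' step in the proof of the parametric estimates
(Theorem 2.4): for every `c > 0` there exist `ρ ∈ (0,1)` and `C > 0` such that
any `C²` function `w` on the open unit ball of `ℝ³` with `w(0) = 0`,
`∇w(0) = 0`, and Hessian bound `‖∇²w‖ ≤ c (1 + |∇w|²)^{3/2}` satisfies
`|w| + |∇w| + ‖∇²w‖ ≤ C` on the ball of radius `ρ`. -/
theorem parametric_calculus_estimate (c : ℝ) (hc : 0 < c) :
    ∃ ρ ∈ Set.Ioo (0 : ℝ) 1, ∃ C > (0 : ℝ),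
      ∀ w : EuclideanSpace ℝ (Fin 3) → ℝ,
        ContDiffOn ℝ 2 w (Metric.ball 0 1) →
        w 0 = 0 →
        fderiv ℝ w 0 = 0 →
        (∀ y ∈ Metric.ball (0 : EuclideanSpace ℝ (Fin 3)) 1,
          ‖fderiv ℝ (fderiv ℝ w) y‖ ≤ c * (1 + ‖fderiv ℝ w y‖ ^ 2) ^ ((3 : ℝ) / 2)) →
        ∀ y : EuclideanSpace ℝ (Fin 3), ‖y‖ ≤ ρ →
          |w y| + ‖fderiv ℝ w y‖ + ‖fderiv ℝ (fderiv ℝ w) y‖ ≤ C := by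
  refine ⟨min (1/2) (1/(12*c)), ⟨lt_min (by norm_num) (by positivity), ?_⟩, 3*c + 2, by positivity, ?_⟩
  · calc min (1/2) (1/(12*c)) ≤ 1/2 := min_le_left _ _
      _ < 1 := by norm_num
  intro w hw hw0 h0 hH y hy
  set ρ := min (1/2) (1/(12*c)) with hρ_def
  have hρ0 : 0 < ρ := lt_min (by norm_num) (by positivity)
  have hρ2 : ρ ≤ 1/2 := min_le_left _ _
  have hρc : 3 * c * ρ ≤ 1/4 := by
    have h1 : ρ ≤ 1/(12*c) := min_le_right _ _
    have h2 : 3 * c * ρ ≤ 3 * c * (1/(12*c)) := by nlinarith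
    have h3 : 3 * c * (1/(12*c)) = 1/4 := by field_simp; ring
    linarith
  have hgrad := grad_small c ρ hc hρ0 hρ2 hρc w hw h0 hH
  have hyball : y ∈ Metric.ball (0 : EuclideanSpace ℝ (Fin 3)) 1 := by
    rw [mem_ball_zero_iff]; linarith [hy, hρ2]
  -- gradient bound
  have hg : ‖fderiv ℝ w y‖ ≤ 1/2 := hgrad y hy
  -- Hessian bound
  have hhess : ‖fderiv ℝ (fderiv ℝ w) y‖ ≤ 3 * c := by
    calc ‖fderiv ℝ (fderiv ℝ w) y‖
        ≤ c * (1 + ‖fderiv ℝ w y‖ ^ 2) ^ ((3:ℝ)/2) := hH y hyball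
      _ ≤ 3 * c := hess_bound_aux c _ hc.le (norm_nonneg _) (by linarith)
  -- value bound from the mean value theorem
  have hval : |w y| ≤ 1/2 := by
    have hseg : ∀ z ∈ segment ℝ (0 : EuclideanSpace ℝ (Fin 3)) y,
        ∃ u : ℝ, 0 ≤ u ∧ u ≤ 1 ∧ z = u • y := by
      intro z hz
      rw [segment_eq_image] at hz
      obtain ⟨u, hu, hz⟩ := hz
      exact ⟨u, hu.1, hu.2, by rw [← hz]; simp⟩
    have hnorm : ∀ u : ℝ, 0 ≤ u → u ≤ 1 → ‖u • y‖ ≤ ρ := by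
      intro u hu0 hu1
      rw [norm_smul, Real.norm_eq_abs, abs_of_nonneg hu0]
      calc u * ‖y‖ ≤ 1 * ρ := mul_le_mul hu1 hy (norm_nonneg _) zero_le_one
        _ = ρ := one_mul ρ
    have hdiff : ∀ z ∈ segment ℝ (0 : EuclideanSpace ℝ (Fin 3)) y,
        DifferentiableAt ℝ w z := by
      intro z hz
      obtain ⟨u, hu0, hu1, rfl⟩ := hseg z hz
      have : u • y ∈ Metric.ball (0 : EuclideanSpace ℝ (Fin 3)) 1 := by
        rw [mem_ball_zero_iff]
        linarith [hnorm u hu0 hu1]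
      have hcd : ContDiffAt ℝ 2 w (u • y) := hw.contDiffAt (isOpen_ball.mem_nhds this)
      exact hcd.differentiableAt (by norm_num)
    have hbound : ∀ z ∈ segment ℝ (0 : EuclideanSpace ℝ (Fin 3)) y,
        ‖fderiv ℝ w z‖ ≤ 1/2 := by
      intro z hz
      obtain ⟨u, hu0, hu1, rfl⟩ := hseg z hz
      exact hgrad _ (hnorm u hu0 hu1)
    have hmvt := (convex_segment (0 : EuclideanSpace ℝ (Fin 3)) y).norm_image_sub_le_of_norm_fderiv_le
      hdiff hbound (left_mem_segment ℝ _ _) (right_mem_segment ℝ _ _)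
    rw [hw0, sub_zero, sub_zero, Real.norm_eq_abs] at hmvt
    calc |w y| ≤ 1/2 * ‖y‖ := hmvt
      _ ≤ 1/2 * (1/2) := by nlinarith [hy, hρ2, norm_nonneg y]
      _ ≤ 1/2 := by norm_num
  linarith
end
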